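/- For every p ∈ S², (1/(4π)) · ∫_{q ∈ S²} ln‖p − q‖ dσ(q) = ln 2 − 1/2. -/

import Mathlib

open MeasureTheory Real Filter
open scoped RealInnerProductSpace

noncomputable abbrev E3 := EuclideanSpace ℝ (Fin 3)

noncomputable abbrev S2 := Metric.sphere (0 : E3) 1

/-- The surface measure on the unit sphere `S²` (total mass `4π`). -/
noncomputable def σ2 : Measure S2 := (volume : Measure E3).toSphere

open Set Metric intervalIntegral
open scoped ENNReal



noncomputable def kk (a r : ℝ) : ℝ :=
  r * Real.log 2 + (r/2) * Real.log (a^2 + r^2) - r * Real.log r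

noncomputable def KK (a : ℝ) : ℝ :=
  ((1 - a^2)/2) * Real.log 2 - (a^2/4) * Real.log (a^2) - ((1 - a^2)/4) * Real.log (1 - a^2)

noncomputable def GG (a r : ℝ) : ℝ :=
  (r^2/2) * Real.log 2 + ((a^2 + r^2)/4) * Real.log (a^2 + r^2) - (a^2 + r^2)/4
    - (r/2) * (r * Real.log r) + r^2/4

noncomputable def FF (a : ℝ) : ℝ :=
  (Real.log 2/2) * (a - a^3/3) + a/3 - (a^2/6) * (a * Real.log a)
    + (((1 - a) * (a + 2))/12) * ((1 - a) * Real.log (1 - a))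
    - (((1 + a) * (2 - a))/12) * ((1 + a) * Real.log (1 + a))

lemma kk_cont {a : ℝ} (ha : a ≠ 0) : Continuous (kk a) := by
  have h1 : Continuous fun r : ℝ => Real.log (a^2 + r^2) := by
    apply Continuous.log (by fun_prop)
    intro x; positivity
  exact ((continuous_id.mul continuous_const).add
    ((continuous_id.div_const 2).mul h1)).sub Real.continuous_mul_log

lemma kk_nonneg {a r : ℝ} (hr : 0 < r) : 0 ≤ kk a r := by
  have h : Real.log r ≤ (1/2) * Real.log (a^2 + r^2) := by
    have : Real.log r = (1/2) * Real.log (r^2) := by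
      rw [Real.log_pow]; push_cast; ring
    rw [this]
    have := Real.log_le_log (by positivity) (show r^2 ≤ a^2 + r^2 by nlinarith [sq_nonneg a])
    linarith
  have h2 : (0:ℝ) ≤ Real.log 2 := Real.log_nonneg (by norm_num)
  have : kk a r = r * (Real.log 2 + ((1/2) * Real.log (a^2+r^2) - Real.log r)) := by
    unfold kk; ring
  rw [this]
  apply mul_nonneg hr.le; linarith

lemma GG_hasDeriv {a r : ℝ} (hr : 0 < r) : HasDerivAt (GG a) (kk a r) r := by
  have hs : a^2 + r^2 ≠ 0 := by positivity
  have h1 : HasDerivAt (fun r : ℝ => a^2 + r^2) (2*r) r := by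
    simpa using (hasDerivAt_pow 2 r).const_add (a^2)
  have h2 : HasDerivAt (fun r : ℝ => Real.log (a^2 + r^2)) (2*r / (a^2+r^2)) r := by
    have := (Real.hasDerivAt_log hs).comp r h1
    simpa [Function.comp_def, div_eq_inv_mul, mul_comm] using this
  have h3 : HasDerivAt (fun r : ℝ => r * Real.log r) (Real.log r + 1) r :=
    Real.hasDerivAt_mul_log hr.ne'
  have h4 : HasDerivAt (fun r : ℝ => (r^2/2) * Real.log 2) (r * Real.log 2) r := by
    simpa using ((hasDerivAt_pow 2 r).div_const 2).mul_const (Real.log 2)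
  have h5 : HasDerivAt (fun r : ℝ => ((a^2 + r^2)/4) * Real.log (a^2 + r^2))
      ((2*r/4) * Real.log (a^2+r^2) + ((a^2+r^2)/4) * (2*r/(a^2+r^2))) r :=
    (h1.div_const 4).mul h2
  have h6 : HasDerivAt (fun r : ℝ => (a^2 + r^2)/4) (2*r/4) r := h1.div_const 4
  have h7 : HasDerivAt (fun r : ℝ => (r/2) * (r * Real.log r))
      ((1/2) * (r * Real.log r) + (r/2) * (Real.log r + 1)) r :=
    ((hasDerivAt_id r).div_const 2).mul h3
  have h8 : HasDerivAt (fun r : ℝ => r^2/4) (2*r/4) r := by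
    simpa using (hasDerivAt_pow 2 r).div_const 4
  have := (((h4.add h5).sub h6).sub h7).add h8
  refine this.congr_deriv ?_
  have : (a^2+r^2)/4 * (2*r/(a^2+r^2)) = r/2 := by field_simp; ring
  rw [this]; unfold kk; ring

lemma inner_integral {a : ℝ} (ha : a ≠ 0) (ha1 : a^2 < 1) :
    ∫ r in (0:ℝ)..Real.sqrt (1 - a^2), kk a r = KK a := by
  set R := Real.sqrt (1 - a^2) with hRdef
  have hR0 : 0 < R := Real.sqrt_pos.2 (by linarith)
  have hR2 : R^2 = 1 - a^2 := Real.sq_sqrt (by linarith)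
  have hcont : Continuous (GG a) := by
    have h1 : Continuous fun r : ℝ => Real.log (a^2 + r^2) := by
      apply Continuous.log (by fun_prop)
      intro x; positivity
    unfold GG
    fun_prop (disch := exact Real.continuous_mul_log)
  have hftc : ∫ r in (0:ℝ)..R, kk a r = GG a R - GG a 0 := by
    apply intervalIntegral.integral_eq_sub_of_hasDeriv_right_of_le hR0.le
      hcont.continuousOn
      (fun x hx => (GG_hasDeriv hx.1).hasDerivWithinAt)
      ((kk_cont ha).intervalIntegrable 0 R)
  rw [hftc]
  have e1 : a^2 + R^2 = 1 := by rw [hR2]; ring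
  have e2 : Real.log R = Real.log (1 - a^2) / 2 := by
    rw [hRdef, Real.log_sqrt (by linarith)]
  have e3 : a^2 + 0^2 = a^2 := by ring
  unfold GG KK
  rw [e1, e3, Real.log_one, e2]
  linear_combination (Real.log 2/2 + 1/4 - Real.log (1-a^2)/4) * hR2
lemma KK_cont : Continuous KK := by
  have h : KK = fun a => ((1 - a^2)/2) * Real.log 2 - (1/4) * ((a^2) * Real.log (a^2))
      - (1/4) * ((1 - a^2) * Real.log (1 - a^2)) := by
    funext a; unfold KK; ring
  rw [h]
  have h1 : Continuous fun a : ℝ => (a^2) * Real.log (a^2) :=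
    Real.continuous_mul_log.comp (continuous_pow 2)
  have h2 : Continuous fun a : ℝ => (1 - a^2) * Real.log (1 - a^2) :=
    Real.continuous_mul_log.comp (continuous_const.sub (continuous_pow 2))
  fun_prop

lemma KK_nonneg {a : ℝ} (h : a^2 ≤ 1) : 0 ≤ KK a := by
  have h1 : Real.log (a^2) ≤ 0 := Real.log_nonpos (sq_nonneg a) h
  have h2 : Real.log (1 - a^2) ≤ 0 := Real.log_nonpos (by nlinarith [sq_nonneg a]) (by nlinarith [sq_nonneg a])
  have h3 : (0:ℝ) ≤ Real.log 2 := Real.log_nonneg (by norm_num)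
  have h4 : (0:ℝ) ≤ 1 - a^2 := by linarith
  unfold KK
  have := mul_nonneg (sq_nonneg a) (neg_nonneg.2 h1)
  have := mul_nonneg h4 (neg_nonneg.2 h2)
  nlinarith

lemma KK_even (a : ℝ) : KK (-a) = KK a := by unfold KK; rw [neg_pow]; norm_num

lemma FF_cont : Continuous FF := by
  have h1 : Continuous fun a : ℝ => a * Real.log a := Real.continuous_mul_log
  have h2 : Continuous fun a : ℝ => (1 - a) * Real.log (1 - a) :=
    Real.continuous_mul_log.comp (continuous_const.sub continuous_id)
  have h3 : Continuous fun a : ℝ => (1 + a) * Real.log (1 + a) :=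
    Real.continuous_mul_log.comp (continuous_const.add continuous_id)
  unfold FF; fun_prop

lemma FF_hasDeriv {a : ℝ} (h0 : 0 < a) (h1 : a < 1) : HasDerivAt FF (KK a) a := by
  have ha : a ≠ 0 := h0.ne'
  have hma : 1 - a ≠ 0 := by linarith
  have hpa : 1 + a ≠ 0 := by linarith
  have d1 : HasDerivAt (fun a : ℝ => a * Real.log a) (Real.log a + 1) a :=
    Real.hasDerivAt_mul_log ha
  have d2 : HasDerivAt (fun a : ℝ => (1 - a) * Real.log (1 - a))
      ((Real.log (1 - a) + 1) * (-1)) a := by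
    have := (Real.hasDerivAt_mul_log hma).comp a
      ((hasDerivAt_id a).const_sub 1)
    simpa [Function.comp_def] using this
  have d3 : HasDerivAt (fun a : ℝ => (1 + a) * Real.log (1 + a))
      ((Real.log (1 + a) + 1) * 1) a := by
    have := (Real.hasDerivAt_mul_log hpa).comp a
      ((hasDerivAt_id a).const_add 1)
    simpa [Function.comp_def] using this
  have p1 : HasDerivAt (fun a : ℝ => (Real.log 2/2) * (a - a^3/3))
      ((Real.log 2/2) * (1 - 3*a^2/3)) a := by
    exact (((hasDerivAt_id a).sub ((hasDerivAt_pow 3 a).div_const 3))).const_mul _ |>.congr_deriv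
      (by push_cast; ring)
  have p2 : HasDerivAt (fun a : ℝ => a/3) (1/3) a := (hasDerivAt_id a).div_const 3
  have p3 : HasDerivAt (fun a : ℝ => (a^2/6) * (a * Real.log a))
      ((2*a/6) * (a * Real.log a) + (a^2/6) * (Real.log a + 1)) a := by
    exact (((hasDerivAt_pow 2 a).div_const 6).mul d1).congr_deriv (by push_cast; ring)
  have p4 : HasDerivAt (fun a : ℝ => (((1 - a) * (a + 2))/12) * ((1 - a) * Real.log (1 - a)))
      ((((-1) * (a + 2) + (1 - a) * 1)/12) * ((1 - a) * Real.log (1 - a))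
        + (((1 - a) * (a + 2))/12) * ((Real.log (1 - a) + 1) * (-1))) a := by
    have q : HasDerivAt (fun a : ℝ => ((1 - a) * (a + 2))/12)
        (((-1) * (a + 2) + (1 - a) * 1)/12) a := by
      exact ((((hasDerivAt_id a).const_sub 1).mul ((hasDerivAt_id a).add_const 2)).div_const
        12).congr_deriv (by simp only [id_eq]; try ring)
    exact q.mul d2
  have p5 : HasDerivAt (fun a : ℝ => (((1 + a) * (2 - a))/12) * ((1 + a) * Real.log (1 + a)))
      (((1 * (2 - a) + (1 + a) * (-1))/12) * ((1 + a) * Real.log (1 + a))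
        + (((1 + a) * (2 - a))/12) * ((Real.log (1 + a) + 1) * 1)) a := by
    have q : HasDerivAt (fun a : ℝ => ((1 + a) * (2 - a))/12)
        ((1 * (2 - a) + (1 + a) * (-1))/12) a := by
      exact ((((hasDerivAt_id a).const_add 1).mul ((hasDerivAt_id a).const_sub 2)).div_const
        12).congr_deriv (by simp only [id_eq]; try ring)
    exact q.mul d3
  have := ((((p1.add p2).sub p3).add p4).sub p5)
  refine this.congr_deriv ?_
  have e1 : Real.log (a^2) = 2 * Real.log a := by
    rw [show a^2 = a^2 from rfl, Real.log_pow]; push_cast; ring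
  have e2 : Real.log (1 - a^2) = Real.log (1 - a) + Real.log (1 + a) := by
    rw [show (1:ℝ) - a^2 = (1-a) * (1+a) by ring, Real.log_mul hma hpa]
  unfold KK; rw [e1, e2]; ring

lemma outer_integral : ∫ a in (-1:ℝ)..1, KK a = 2/3 := by
  have hint : ∀ u v : ℝ, IntervalIntegrable KK volume u v :=
    fun u v => KK_cont.intervalIntegrable u v
  have h01 : ∫ a in (0:ℝ)..1, KK a = 1/3 := by
    have hftc : ∫ a in (0:ℝ)..1, KK a = FF 1 - FF 0 := by
      apply intervalIntegral.integral_eq_sub_of_hasDeriv_right_of_le (by norm_num)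
        FF_cont.continuousOn
        (fun x hx => (FF_hasDeriv hx.1 hx.2).hasDerivWithinAt)
        (hint 0 1)
    rw [hftc]; unfold FF; norm_num; ring
  have hneg : ∫ a in (-1:ℝ)..0, KK a = 1/3 := by
    have : ∫ a in (0:ℝ)..1, KK (-a) = ∫ a in (-1:ℝ)..0, KK a := by
      simpa using intervalIntegral.integral_comp_neg (a := 0) (b := 1) (f := KK)
    rw [← this]
    simp_rw [KK_even]
    exact h01
  rw [← intervalIntegral.integral_add_adjacent_intervals (hint (-1) 0) (hint 0 1), hneg, h01]
  norm_num

lemma lemP {E : Type*} [NormedAddCommGroup E] [NormedSpace ℝ E]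
    [MeasurableSpace E] [BorelSpace E] [FiniteDimensional ℝ E]
    (μ : Measure E) [μ.IsAddHaarMeasure]
    (φ : E → ℝ≥0∞) (ψ : ℝ → ℝ≥0∞) (hφ : Measurable φ) (hψ : Measurable ψ) :
    (∫⁻ q : sphere (0:E) 1, φ q ∂μ.toSphere) *
      (∫⁻ r in Ioi (0:ℝ), ψ r * ENNReal.ofReal (r ^ (Module.finrank ℝ E - 1))) =
    ∫⁻ x in {(0:E)}ᶜ, φ (‖x‖⁻¹ • x) * ψ ‖x‖ ∂μ := by
  have MP := μ.measurePreserving_homeomorphUnitSphereProd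
  have hmeas : Measurable fun y : sphere (0:E) 1 × Ioi (0:ℝ) => φ y.1 * ψ y.2 :=
    ((hφ.comp measurable_subtype_coe).comp measurable_fst).mul
      ((hψ.comp measurable_subtype_coe).comp measurable_snd)
  have h1 : ∫⁻ y : sphere (0:E) 1 × Ioi (0:ℝ), φ y.1 * ψ y.2
      ∂(μ.toSphere.prod (.volumeIoiPow (Module.finrank ℝ E - 1))) =
      (∫⁻ q : sphere (0:E) 1, φ q ∂μ.toSphere) *
        (∫⁻ r in Ioi (0:ℝ), ψ r * ENNReal.ofReal (r ^ (Module.finrank ℝ E - 1))) := by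
    rw [lintegral_prod_mul (f := fun q : sphere (0:E) 1 => φ q) (g := fun r : Ioi (0:ℝ) => ψ r)
      ((hφ.comp measurable_subtype_coe).aemeasurable)
      ((hψ.comp measurable_subtype_coe).aemeasurable)]
    congr 1
    rw [Measure.volumeIoiPow,
      lintegral_withDensity_eq_lintegral_mul _
        (f := fun r : Ioi (0:ℝ) => ENNReal.ofReal (r.1 ^ (Module.finrank ℝ E - 1)))
        (by exact (measurable_subtype_coe.pow_const _).ennreal_ofReal)
        (g := fun r : Ioi (0:ℝ) => ψ r) (hψ.comp measurable_subtype_coe)]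
    have := lintegral_subtype_comap (μ := (volume : Measure ℝ)) (s := Ioi (0:ℝ)) measurableSet_Ioi
      (fun r : ℝ => ENNReal.ofReal (r ^ (Module.finrank ℝ E - 1)) * ψ r)
    refine Eq.trans ?_ (this.trans ?_)
    · rfl
    · exact setLIntegral_congr_fun measurableSet_Ioi (fun r _ => by
        simp [mul_comm])
  rw [← h1, ← MP.lintegral_comp hmeas]
  have h2 : ∀ a : ({(0:E)}ᶜ : Set E),
      φ ((homeomorphUnitSphereProd E a).1 : E) * ψ ((homeomorphUnitSphereProd E a).2 : ℝ)
        = φ (‖(a:E)‖⁻¹ • (a:E)) * ψ ‖(a:E)‖ := by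
    intro a; simp
  exact (lintegral_congr h2).trans
    (lintegral_subtype_comap (measurableSet_singleton (0:E)).compl
      (fun x : E => φ (‖x‖⁻¹ • x) * ψ ‖x‖))

lemma vol_ball3 : (volume : Measure (EuclideanSpace ℝ (Fin 3))) (ball 0 1)
    = ENNReal.ofReal (4 * π / 3) := by
  rw [EuclideanSpace.volume_ball]
  have hG : Real.Gamma ((Fintype.card (Fin 3) : ℝ) / 2 + 1) = 3/4 * Real.sqrt π := by
    have : ((Fintype.card (Fin 3) : ℝ)) / 2 + 1 = (3:ℝ)/2 + 1 := by norm_num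
    rw [this, Real.Gamma_add_one (by norm_num),
      show (3:ℝ)/2 = 1/2 + 1 by norm_num, Real.Gamma_add_one (by norm_num),
      Real.Gamma_one_half_eq]
    ring
  rw [hG]
  have h1 : Real.sqrt π ^ Fintype.card (Fin 3) = π * Real.sqrt π := by
    rw [show Fintype.card (Fin 3) = 3 by simp, pow_succ, Real.sq_sqrt Real.pi_nonneg]
  rw [h1]
  have hs : Real.sqrt π ≠ 0 := by
    positivity
  have : π * Real.sqrt π / (3/4 * Real.sqrt π) = 4 * π / 3 := by
    field_simp
  rw [this]
  simp

lemma vol_ball2 : (volume : Measure (EuclideanSpace ℝ (Fin 2))) (ball 0 1)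
    = ENNReal.ofReal π := by
  rw [EuclideanSpace.volume_ball]
  have hG : Real.Gamma ((Fintype.card (Fin 2) : ℝ) / 2 + 1) = 1 := by
    have : ((Fintype.card (Fin 2) : ℝ)) / 2 + 1 = (1:ℝ) + 1 := by norm_num
    rw [this, Real.Gamma_add_one (by norm_num), Real.Gamma_one]
    ring
  rw [hG]
  have h1 : Real.sqrt π ^ Fintype.card (Fin 2) = π := by
    rw [show Fintype.card (Fin 2) = 2 by simp, pow_two, Real.mul_self_sqrt Real.pi_nonneg]
  rw [h1]
  simp

lemma sphere3_univ : (volume : Measure (EuclideanSpace ℝ (Fin 3))).toSphere univ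
    = ENNReal.ofReal (4 * π) := by
  rw [Measure.toSphere_apply_univ, vol_ball3]
  have h3 : (Module.finrank ℝ (EuclideanSpace ℝ (Fin 3)) : ℝ≥0∞) = 3 := by
    simp [finrank_euclideanSpace]
  rw [h3, show (3:ℝ≥0∞) = ENNReal.ofReal 3 by simp, ← ENNReal.ofReal_mul (by norm_num)]
  congr 1
  ring

lemma sphere2_univ : (volume : Measure (EuclideanSpace ℝ (Fin 2))).toSphere univ
    = ENNReal.ofReal (2 * π) := by
  rw [Measure.toSphere_apply_univ, vol_ball2]
  have h2 : (Module.finrank ℝ (EuclideanSpace ℝ (Fin 2)) : ℝ≥0∞) = 2 := by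
    simp [finrank_euclideanSpace]
  rw [h2, show (2:ℝ≥0∞) = ENNReal.ofReal 2 by simp, ← ENNReal.ofReal_mul (by norm_num)]


/-- Sphere integral as ball integral, dimension 3. -/
lemma lemS (φ : E3 → ℝ≥0∞) (hφ : Measurable φ) :
    ∫⁻ q : sphere (0:E3) 1, φ q ∂(volume : Measure E3).toSphere
      = 3 * ∫⁻ x in ball (0:E3) 1 \ {0}, φ (‖x‖⁻¹ • x) := by
  have h := lemP (volume : Measure E3) φ
    (fun r => (Iio (1:ℝ)).indicator (fun _ => 1) r) hφ
    (measurable_one.indicator measurableSet_Iio)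
  have hfr : Module.finrank ℝ E3 - 1 = 2 := by
    simp [finrank_euclideanSpace]
  rw [hfr] at h
  have hpsi : ∫⁻ r in Ioi (0:ℝ),
      (Iio (1:ℝ)).indicator (fun _ => (1:ℝ≥0∞)) r * ENNReal.ofReal (r ^ 2)
        = ENNReal.ofReal (1/3) := by
    have e : ∀ r : ℝ, (Iio (1:ℝ)).indicator (fun _ => (1:ℝ≥0∞)) r * ENNReal.ofReal (r ^ 2)
        = (Iio (1:ℝ)).indicator (fun r => ENNReal.ofReal (r ^ 2)) r := by
      intro r
      by_cases hr : r ∈ Iio (1:ℝ) <;> simp [indicator_apply, hr]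
    rw [lintegral_congr e, lintegral_indicator measurableSet_Iio,
      Measure.restrict_restrict measurableSet_Iio, Iio_inter_Ioi]
    rw [← ofReal_integral_eq_lintegral_ofReal]
    · congr 1
      rw [← integral_Ioc_eq_integral_Ioo, ← intervalIntegral.integral_of_le (by norm_num : (0:ℝ) ≤ 1)]
      norm_num [integral_pow]
    · exact (continuous_pow 2).integrableOn_Icc.mono_set Ioo_subset_Icc_self
    · exact Filter.Eventually.of_forall fun r => sq_nonneg r
  rw [hpsi] at h
  have hrhs : ∫⁻ x in {(0:E3)}ᶜ,
      φ (‖x‖⁻¹ • x) * (Iio (1:ℝ)).indicator (fun _ => (1:ℝ≥0∞)) ‖x‖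
        = ∫⁻ x in ball (0:E3) 1 \ {0}, φ (‖x‖⁻¹ • x) := by
    have e : ∀ x : E3, φ (‖x‖⁻¹ • x) * (Iio (1:ℝ)).indicator (fun _ => (1:ℝ≥0∞)) ‖x‖
        = (ball (0:E3) 1).indicator (fun x => φ (‖x‖⁻¹ • x)) x := by
      intro x
      by_cases hx : ‖x‖ < 1
      · simp [indicator_apply, hx, mem_ball_zero_iff]
      · simp [indicator_apply, hx, mem_ball_zero_iff]
    rw [lintegral_congr e, lintegral_indicator measurableSet_ball,
      Measure.restrict_restrict measurableSet_ball, Set.diff_eq]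
  rw [hrhs] at h
  have h13 : (ENNReal.ofReal (1/3) * 3 : ℝ≥0∞) = 1 := by
    rw [show (3:ℝ≥0∞) = ENNReal.ofReal 3 by simp, ← ENNReal.ofReal_mul (by norm_num)]
    norm_num
  calc ∫⁻ q : sphere (0:E3) 1, φ q ∂(volume : Measure E3).toSphere
      = (∫⁻ q : sphere (0:E3) 1, φ q ∂(volume : Measure E3).toSphere)
          * (ENNReal.ofReal (1/3) * 3) := by rw [h13, mul_one]
    _ = ((∫⁻ q : sphere (0:E3) 1, φ q ∂(volume : Measure E3).toSphere)
          * ENNReal.ofReal (1/3)) * 3 := by ring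
    _ = (∫⁻ x in ball (0:E3) 1 \ {0}, φ (‖x‖⁻¹ • x)) * 3 := by rw [h]
    _ = 3 * ∫⁻ x in ball (0:E3) 1 \ {0}, φ (‖x‖⁻¹ • x) := by ring

/-- 2D radial formula. -/
lemma lemC (h : ℝ → ℝ≥0∞) (hh : Measurable h) :
    ∫⁻ z : ℝ × ℝ, h (Real.sqrt (z.1^2 + z.2^2))
      = ENNReal.ofReal (2*π) * ∫⁻ r in Ioi (0:ℝ), h r * ENNReal.ofReal r := by
  classical
  set E2 := EuclideanSpace ℝ (Fin 2)
  have mp : MeasurePreserving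
      (fun x : E2 => MeasurableEquiv.finTwoArrow ((MeasurableEquiv.toLp 2 (Fin 2 → ℝ)).symm x))
      volume volume :=
    (volume_preserving_finTwoArrow ℝ).comp (EuclideanSpace.volume_preserving_symm_measurableEquiv_toLp (ι := Fin 2))
  have hmeas : Measurable fun z : ℝ × ℝ => h (Real.sqrt (z.1^2 + z.2^2)) := by
    apply hh.comp
    exact (Real.continuous_sqrt.comp
      (((continuous_fst.pow 2).add (continuous_snd.pow 2)))).measurable
  have step1 : ∫⁻ z : ℝ × ℝ, h (Real.sqrt (z.1^2 + z.2^2)) = ∫⁻ x : E2, h ‖x‖ := by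
    rw [← mp.lintegral_comp hmeas]
    refine lintegral_congr fun x => ?_
    congr 1
    have : ‖x‖ = Real.sqrt ((x 0)^2 + (x 1)^2) := by
      rw [EuclideanSpace.norm_eq]
      congr 1
      rw [Fin.sum_univ_two]
      simp [Real.norm_eq_abs, sq_abs]
    rw [this]
    rfl
  have h0 : (volume : Measure E2) {0} = 0 := measure_singleton 0
  have step2 := lemP (volume : Measure E2) (fun _ => (1:ℝ≥0∞)) h measurable_const hh
  have hfr : Module.finrank ℝ E2 - 1 = 1 := by
    simp [E2, finrank_euclideanSpace]
  rw [hfr] at step2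
  simp only [lintegral_const, one_mul, pow_one] at step2
  have huniv : (volume : Measure E2).toSphere univ = ENNReal.ofReal (2*π) := sphere2_univ
  have hcompl : ∫⁻ x in {(0:E2)}ᶜ, h ‖x‖ = ∫⁻ x : E2, h ‖x‖ := by
    rw [← lintegral_indicator (measurableSet_singleton (0:E2)).compl]
    refine lintegral_congr_ae ?_
    filter_upwards [compl_mem_ae_iff.2 h0] with x hx
    simp [indicator_apply, hx]
  rw [step1, ← hcompl, ← step2, huniv]

lemma exists_basis (p : E3) (hp : ‖p‖ = 1) :
    ∃ b : OrthonormalBasis (Fin 3) ℝ E3, b 0 = p := by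
  have horth : Orthonormal ℝ (({0} : Set (Fin 3)).restrict (fun _ => p)) := by
    constructor
    · intro i; exact hp
    · intro i j hij
      exact absurd (Subtype.ext ((mem_singleton_iff.1 i.2).trans
        (mem_singleton_iff.1 j.2).symm)) hij
  obtain ⟨b, hb⟩ := Orthonormal.exists_orthonormalBasis_extension_of_card_eq
    (by simp [finrank_euclideanSpace]) horth
  exact ⟨b, hb 0 rfl⟩

lemma transfer3 (p : E3) (hp : ‖p‖ = 1) (W : ℝ → ℝ → ℝ≥0∞)
    (hW : Measurable fun z : ℝ × ℝ => W z.1 z.2) :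
    ∫⁻ x : E3, W ⟪p, x⟫ ‖x‖
      = ∫⁻ z : ℝ × ℝ × ℝ, W z.1 (Real.sqrt (z.1^2 + z.2.1^2 + z.2.2^2)) := by
  obtain ⟨b, hb0⟩ := exists_basis p hp
  have mp2 : MeasurePreserving
      (Prod.map (id : ℝ → ℝ) (MeasurableEquiv.finTwoArrow : (Fin 2 → ℝ) ≃ᵐ ℝ × ℝ))
      volume volume := by
    rw [MeasureTheory.Measure.volume_eq_prod ℝ (Fin 2 → ℝ), MeasureTheory.Measure.volume_eq_prod ℝ (ℝ × ℝ)]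
    exact (MeasurePreserving.id volume).prod (volume_preserving_finTwoArrow ℝ)
  have mp : MeasurePreserving
      (fun x : E3 => Prod.map (id : ℝ → ℝ) (MeasurableEquiv.finTwoArrow : (Fin 2 → ℝ) ≃ᵐ ℝ × ℝ)
        (MeasurableEquiv.piFinSuccAbove (fun _ : Fin 3 => ℝ) 0
          ((MeasurableEquiv.toLp 2 (Fin 3 → ℝ)).symm (b.repr x))))
      volume volume :=
    (mp2.comp (volume_preserving_piFinSuccAbove (fun _ : Fin 3 => ℝ) 0)).comp
      ((EuclideanSpace.volume_preserving_symm_measurableEquiv_toLp (ι := Fin 3)).comp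
        b.measurePreserving_repr)
  have hg : Measurable fun z : ℝ × ℝ × ℝ => W z.1 (Real.sqrt (z.1^2 + z.2.1^2 + z.2.2^2)) := by
    exact hW.comp
      (show Measurable fun z : ℝ × ℝ × ℝ =>
          ((z.1, Real.sqrt (z.1^2 + z.2.1^2 + z.2.2^2)) : ℝ × ℝ) from
        measurable_fst.prodMk ((Real.continuous_sqrt.comp (by fun_prop)).measurable))
  rw [← mp.lintegral_comp hg]
  refine lintegral_congr fun x => ?_
  have hcoord : ∀ i : Fin 3, ((MeasurableEquiv.toLp 2 (Fin 3 → ℝ)).symm) (b.repr x) i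
      = b.repr x i := fun _ => rfl
  have h1 : (Prod.map (id : ℝ → ℝ) (MeasurableEquiv.finTwoArrow : (Fin 2 → ℝ) ≃ᵐ ℝ × ℝ)
      (MeasurableEquiv.piFinSuccAbove (fun _ : Fin 3 => ℝ) 0
        ((MeasurableEquiv.toLp 2 (Fin 3 → ℝ)).symm (b.repr x))))
      = (b.repr x 0, (b.repr x 1, b.repr x 2)) := by
    refine Prod.ext ?_ (Prod.ext ?_ ?_)
    · rfl
    · show b.repr x (Fin.succAbove 0 0) = b.repr x 1
      rfl
    · show b.repr x (Fin.succAbove 0 1) = b.repr x 2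
      rfl
  rw [h1]
  have h2 : b.repr x 0 = ⟪p, x⟫ := by
    rw [OrthonormalBasis.repr_apply_apply, hb0, real_inner_comm]
  have h3 : Real.sqrt ((b.repr x 0)^2 + (b.repr x 1)^2 + (b.repr x 2)^2) = ‖x‖ := by
    rw [← b.repr.norm_map x, EuclideanSpace.norm_eq, Fin.sum_univ_three]
    simp [Real.norm_eq_abs, sq_abs]
  simp only [h2] at h3 ⊢
  rw [h3]

noncomputable def gg (a s : ℝ) : ℝ := Real.log 2 - (1/2) * Real.log (2 - 2*a/s)

noncomputable def W1 (a s : ℝ) : ℝ≥0∞ :=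
  if 0 < s ∧ s < 1 then ENNReal.ofReal (gg a s) else 0

lemma W1_meas : Measurable fun z : ℝ × ℝ => W1 z.1 z.2 := by
  unfold W1 gg
  apply Measurable.ite
  · exact MeasurableSet.inter (measurableSet_lt measurable_const measurable_snd)
      (measurableSet_lt measurable_snd measurable_const)
  · apply Measurable.ennreal_ofReal
    apply Measurable.sub measurable_const
    apply Measurable.const_mul
    exact Real.measurable_log.comp
      (measurable_const.sub ((measurable_fst.const_mul 2).div measurable_snd))
  · exact measurable_const

lemma gg_nonneg {a s : ℝ} (hs : 0 < s) (ha : |a| < s) : 0 ≤ gg a s := by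
  have h1 : 0 < 2 - 2*a/s := by
    rw [sub_pos, div_lt_iff₀ hs]
    have := (abs_lt.1 ha).2
    linarith
  have h2 : 2 - 2*a/s ≤ 4 := by
    rw [sub_le_iff_le_add]
    have h3 : -s ≤ a := by linarith [(abs_lt.1 ha).1]
    have : -2 ≤ 2*a/s := by
      rw [le_div_iff₀ hs]; linarith
    linarith
  have h4 : Real.log (2 - 2*a/s) ≤ Real.log 4 := Real.log_le_log h1 h2
  have h5 : Real.log 4 = 2 * Real.log 2 := by
    rw [show (4:ℝ) = 2^2 by norm_num, Real.log_pow]; push_cast; ring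
  unfold gg; rw [sub_nonneg]
  calc (1/2) * Real.log (2 - 2*a/s) ≤ (1/2) * (2 * Real.log 2) := by
        rw [h5] at h4; linarith
    _ = Real.log 2 := by ring

lemma gg_add {a r : ℝ} (hr : 0 < r) :
    gg a (Real.sqrt (a^2 + r^2)) + gg (-a) (Real.sqrt (a^2 + r^2))
      = Real.log 2 + Real.log (Real.sqrt (a^2 + r^2)) - Real.log r := by
  set s := Real.sqrt (a^2 + r^2) with hsdef
  have hs2 : s^2 = a^2 + r^2 := Real.sq_sqrt (by positivity)
  have hs : 0 < s := Real.sqrt_pos.2 (by positivity)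
  have habs : |a| < s := by
    rw [← Real.sqrt_sq_eq_abs]
    exact Real.sqrt_lt_sqrt (sq_nonneg a) (by nlinarith)
  have h1 : 0 < 2 - 2*a/s := by
    rw [sub_pos, div_lt_iff₀ hs]; linarith [(abs_lt.1 habs).2]
  have h2 : 0 < 2 - 2*(-a)/s := by
    rw [sub_pos, div_lt_iff₀ hs]; linarith [(abs_lt.1 habs).1]
  have hprod : (2 - 2*a/s) * (2 - 2*(-a)/s) = 4*r^2/s^2 := by
    field_simp
    nlinarith [hs2]
  have hlog : Real.log (2 - 2*a/s) + Real.log (2 - 2*(-a)/s)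
      = 2*Real.log 2 + 2*Real.log r - 2*Real.log s := by
    rw [← Real.log_mul h1.ne' h2.ne', hprod]
    rw [Real.log_div (by positivity) (by positivity), Real.log_mul (by norm_num)
      (by positivity)]
    rw [show (4:ℝ) = 2^2 by norm_num, Real.log_pow, Real.log_pow, Real.log_pow]
    push_cast; ring
  unfold gg
  linarith [hlog]

lemma log_dist (p : E3) (hp : ‖p‖ = 1) (x : E3) (hx : x ≠ 0) :
    Real.log ‖p - ‖x‖⁻¹ • x‖ = (1/2) * Real.log (2 - 2 * ⟪p, x⟫ / ‖x‖) := by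
  have hnx : ‖x‖ ≠ 0 := norm_ne_zero_iff.2 hx
  have hu : ‖‖x‖⁻¹ • x‖ = 1 := by
    rw [norm_smul, norm_inv, norm_norm, inv_mul_cancel₀ hnx]
  have h2 : ‖p - ‖x‖⁻¹ • x‖^2 = 2 - 2 * ⟪p, x⟫ / ‖x‖ := by
    rw [norm_sub_sq_real, hp, hu, real_inner_smul_right]
    field_simp
    ring
  have h3 : Real.log (‖p - ‖x‖⁻¹ • x‖^2) = 2 * Real.log ‖p - ‖x‖⁻¹ • x‖ := by
    rw [Real.log_pow]; push_cast; ring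
  rw [← h2, h3]; ring

lemma key (p : E3) (hp : ‖p‖ = 1) :
    ∫⁻ q : sphere (0:E3) 1, ENNReal.ofReal (Real.log 2 - Real.log ‖p - q‖)
        ∂(volume : Measure E3).toSphere = ENNReal.ofReal (2*π) := by
  classical
  set φ : E3 → ℝ≥0∞ := fun v => ENNReal.ofReal (Real.log 2 - Real.log ‖p - v‖) with hφdef
  have hφ : Measurable φ :=
    (measurable_const.sub (Real.measurable_log.comp
      ((continuous_const.sub continuous_id).norm.measurable))).ennreal_ofReal
  have step1 : ∫⁻ q : sphere (0:E3) 1, φ q ∂(volume : Measure E3).toSphere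
      = 3 * ∫⁻ x in ball (0:E3) 1 \ {0}, φ (‖x‖⁻¹ • x) := lemS φ hφ
  -- rewrite ball integral as a full-space integral of W1
  have hmeas1 : Measurable fun z : ℝ × ℝ × ℝ =>
      W1 z.1 (Real.sqrt (z.1^2 + z.2.1^2 + z.2.2^2)) :=
    W1_meas.comp (measurable_fst.prodMk
      ((Real.continuous_sqrt.comp (by fun_prop)).measurable))
  have step2 : ∫⁻ x in ball (0:E3) 1 \ {0}, φ (‖x‖⁻¹ • x)
      = ∫⁻ x : E3, W1 ⟪p, x⟫ ‖x‖ := by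
    rw [← lintegral_indicator (measurableSet_ball.diff (measurableSet_singleton 0))]
    refine lintegral_congr fun x => ?_
    by_cases hx : x ∈ ball (0:E3) 1 \ {0}
    · have hx' := hx
      obtain ⟨hx1, hx2⟩ := hx
      have hxne : x ≠ 0 := hx2
      have hxpos : 0 < ‖x‖ := norm_pos_iff.2 hxne
      have hxlt : ‖x‖ < 1 := mem_ball_zero_iff.1 hx1
      rw [Set.indicator_of_mem hx']
      unfold W1
      rw [if_pos ⟨hxpos, hxlt⟩]
      unfold gg
      show ENNReal.ofReal (Real.log 2 - Real.log ‖p - ‖x‖⁻¹ • x‖) = _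
      rw [log_dist p hp x hxne]
    · rw [Set.indicator_of_notMem hx]
      unfold W1
      rw [if_neg]
      rintro ⟨h1, h2⟩
      refine hx ⟨mem_ball_zero_iff.2 h2, fun h0 => ?_⟩
      rw [mem_singleton_iff] at h0
      rw [h0] at h1
      simp at h1
  have step3 : ∫⁻ x : E3, W1 ⟪p, x⟫ ‖x‖
      = ∫⁻ z : ℝ × ℝ × ℝ, W1 z.1 (Real.sqrt (z.1^2 + z.2.1^2 + z.2.2^2)) :=
    transfer3 p hp W1 W1_meas
  set I3 := ∫⁻ z : ℝ × ℝ × ℝ, W1 z.1 (Real.sqrt (z.1^2 + z.2.1^2 + z.2.2^2)) with hI3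
  -- symmetrization
  have mpneg : MeasurePreserving (fun z : ℝ × ℝ × ℝ => ((-z.1, z.2) : ℝ × ℝ × ℝ))
      volume volume := by
    rw [MeasureTheory.Measure.volume_eq_prod ℝ (ℝ × ℝ)]
    exact (Measure.measurePreserving_neg volume).prod (MeasurePreserving.id volume)
  have hsymm : I3 = ∫⁻ z : ℝ × ℝ × ℝ,
      W1 (-z.1) (Real.sqrt (z.1^2 + z.2.1^2 + z.2.2^2)) := by
    rw [hI3, ← mpneg.lintegral_comp hmeas1]
    refine lintegral_congr fun z => ?_
    show W1 (-z.1) (Real.sqrt ((-z.1)^2 + z.2.1^2 + z.2.2^2)) = _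
    rw [neg_sq]
  have h2I : 2 * I3 = ∫⁻ z : ℝ × ℝ × ℝ,
      (W1 z.1 (Real.sqrt (z.1^2 + z.2.1^2 + z.2.2^2))
        + W1 (-z.1) (Real.sqrt (z.1^2 + z.2.1^2 + z.2.2^2))) := by
    rw [lintegral_add_left hmeas1, ← hI3, ← hsymm, two_mul]
  -- Tonelli
  have hmeas2 : Measurable fun z : ℝ × ℝ × ℝ =>
      W1 z.1 (Real.sqrt (z.1^2 + z.2.1^2 + z.2.2^2))
        + W1 (-z.1) (Real.sqrt (z.1^2 + z.2.1^2 + z.2.2^2)) := by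
    refine hmeas1.add ?_
    exact (W1_meas.comp ((measurable_fst.neg).prodMk
      ((Real.continuous_sqrt.comp (by fun_prop)).measurable)))
  have tonelli : 2 * I3 = ∫⁻ a : ℝ, ∫⁻ y : ℝ × ℝ,
      (W1 a (Real.sqrt (a^2 + y.1^2 + y.2^2))
        + W1 (-a) (Real.sqrt (a^2 + y.1^2 + y.2^2))) := by
    rw [h2I, MeasureTheory.Measure.volume_eq_prod ℝ (ℝ × ℝ),
      MeasureTheory.lintegral_prod _ hmeas2.aemeasurable]
  -- pointwise evaluation of the inner integral
  have hpointwise : ∀ a : ℝ, a ∉ ({-1, 0, 1} : Set ℝ) →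
      (∫⁻ y : ℝ × ℝ, (W1 a (Real.sqrt (a^2 + y.1^2 + y.2^2))
          + W1 (-a) (Real.sqrt (a^2 + y.1^2 + y.2^2))))
        = (Ioo (-1:ℝ) 1).indicator (fun a => ENNReal.ofReal (2*π*KK a)) a := by
    intro a ha
    simp only [mem_insert_iff, mem_singleton_iff] at ha
    push_neg at ha
    obtain ⟨han1, ha0, ha1⟩ := ha
    rcases lt_trichotomy (a^2) 1 with hlt | heq | hgt
    · -- main case
      set R := Real.sqrt (1 - a^2) with hRdef
      have hR0 : 0 < R := Real.sqrt_pos.2 (by linarith)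
      set h₂ : ℝ → ℝ≥0∞ := fun ρ =>
        W1 a (Real.sqrt (a^2 + ρ^2)) + W1 (-a) (Real.sqrt (a^2 + ρ^2)) with hh2def
      have hh2meas : Measurable h₂ := by
        refine Measurable.add ?_ ?_ <;>
          exact W1_meas.comp (measurable_const.prodMk
            ((Real.continuous_sqrt.comp (by fun_prop)).measurable))
      have hinner : (∫⁻ y : ℝ × ℝ, (W1 a (Real.sqrt (a^2 + y.1^2 + y.2^2))
          + W1 (-a) (Real.sqrt (a^2 + y.1^2 + y.2^2))))
            = ∫⁻ y : ℝ × ℝ, h₂ (Real.sqrt (y.1^2 + y.2^2)) := by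
        refine lintegral_congr fun y => ?_
        rw [hh2def]
        simp only
        rw [show a^2 + (Real.sqrt (y.1^2 + y.2^2))^2 = a^2 + y.1^2 + y.2^2 by
          rw [Real.sq_sqrt (by positivity)]; ring]
      rw [hinner, lemC h₂ hh2meas]
      have hioi : ∫⁻ r in Ioi (0:ℝ), h₂ r * ENNReal.ofReal r
          = ∫⁻ r in Ioo (0:ℝ) R, ENNReal.ofReal (kk a r) := by
        have e : ∀ r ∈ Ioi (0:ℝ), h₂ r * ENNReal.ofReal r
            = (Iio R).indicator (fun r => ENNReal.ofReal (kk a r)) r := by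
          intro r hr
          have hrpos : 0 < r := hr
          set s := Real.sqrt (a^2 + r^2) with hsdef
          have hs2 : s^2 = a^2 + r^2 := Real.sq_sqrt (by positivity)
          have hs : 0 < s := Real.sqrt_pos.2 (by positivity)
          have hA : s < 1 ↔ a^2 + r^2 < 1 := by
            constructor
            · intro h; nlinarith [hs2, hs]
            · intro h; nlinarith [hs2, hs]
          have hB : r < R ↔ a^2 + r^2 < 1 := by
            rw [hRdef, Real.lt_sqrt hrpos.le]
            constructor <;> intro h <;> linarith
          have hiff : s < 1 ↔ r < R := by rw [hA, hB]
          by_cases hRr : r < R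
          · have hslt : s < 1 := hiff.2 hRr
            show (W1 a s + W1 (-a) s) * ENNReal.ofReal r = _
            have habs : |a| < s := by
              rw [← Real.sqrt_sq_eq_abs]
              exact Real.sqrt_lt_sqrt (sq_nonneg a) (by nlinarith)
            have habs' : |(-a)| < s := by rwa [abs_neg]
            rw [Set.indicator_of_mem (mem_Iio.2 hRr)]
            unfold W1
            rw [if_pos ⟨hs, hslt⟩, if_pos ⟨hs, hslt⟩]
            rw [← ENNReal.ofReal_add (gg_nonneg hs habs) (gg_nonneg hs habs')]
            rw [gg_add hrpos]
            have hw : 0 ≤ Real.log 2 + Real.log s - Real.log r := by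
              have h1 : Real.log r ≤ Real.log s := by
                apply Real.log_le_log hrpos
                have hrr : r = Real.sqrt (r^2) := (Real.sqrt_sq hrpos.le).symm
                rw [hsdef]
                nth_rewrite 1 [hrr]
                exact Real.sqrt_le_sqrt (by nlinarith)
              have h2 : (0:ℝ) ≤ Real.log 2 := Real.log_nonneg (by norm_num)
              linarith
            rw [← ENNReal.ofReal_mul hw]
            congr 1
            rw [hsdef, Real.log_sqrt (by positivity)]
            unfold kk
            ring
          · rw [Set.indicator_of_notMem (fun hm => hRr (mem_Iio.1 hm))]
            have hsge : ¬ (s < 1) := fun h => hRr (hiff.1 h)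
            show (W1 a s + W1 (-a) s) * ENNReal.ofReal r = 0
            unfold W1
            rw [if_neg (fun h => hsge h.2), if_neg (fun h => hsge h.2)]
            simp
        rw [setLIntegral_congr_fun measurableSet_Ioi e,
          lintegral_indicator measurableSet_Iio,
          Measure.restrict_restrict measurableSet_Iio, Set.Iio_inter_Ioi]
      rw [hioi]
      have hofReal : ∫⁻ r in Ioo (0:ℝ) R, ENNReal.ofReal (kk a r)
          = ENNReal.ofReal (∫ r in Ioo (0:ℝ) R, kk a r) := by
        rw [← ofReal_integral_eq_lintegral_ofReal]
        · exact (kk_cont ha0).integrableOn_Icc.mono_set Ioo_subset_Icc_self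
        · exact (ae_restrict_iff' measurableSet_Ioo).2
            (Filter.Eventually.of_forall fun r hr => kk_nonneg hr.1)
      rw [hofReal]
      have hval : ∫ r in Ioo (0:ℝ) R, kk a r = KK a := by
        rw [← integral_Ioc_eq_integral_Ioo,
          ← intervalIntegral.integral_of_le hR0.le]
        exact inner_integral ha0 hlt
      rw [hval]
      have hmem : a ∈ Ioo (-1:ℝ) 1 := by
        constructor <;> nlinarith
      rw [Set.indicator_of_mem hmem, ← ENNReal.ofReal_mul (by positivity)]
    · -- |a| = 1 : excluded
      exfalso
      have hfac : (a - 1) * (a + 1) = 0 := by nlinarith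
      rcases mul_eq_zero.1 hfac with h | h
      · exact ha1 (by linarith)
      · exact han1 (by linarith)
    · -- |a| > 1
      have hgone : ∀ y : ℝ × ℝ, W1 a (Real.sqrt (a^2 + y.1^2 + y.2^2))
          + W1 (-a) (Real.sqrt (a^2 + y.1^2 + y.2^2)) = 0 := by
        intro y
        have h1 : (1:ℝ) ≤ Real.sqrt (a^2 + y.1^2 + y.2^2) := by
          rw [show (1:ℝ) = Real.sqrt 1 by rw [Real.sqrt_one]]
          exact Real.sqrt_le_sqrt (by nlinarith)
        unfold W1
        rw [if_neg (fun h => absurd h.2 (not_lt.2 h1)),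
          if_neg (fun h => absurd h.2 (not_lt.2 h1))]
        simp
      have hnotmem : a ∉ Ioo (-1:ℝ) 1 := by
        intro hmem
        nlinarith [hmem.1, hmem.2]
      simp only [hgone]
      rw [Set.indicator_of_notMem hnotmem]
      simp
  -- put together the outer integral
  have houter : 2 * I3 = ENNReal.ofReal (2*π*(2/3)) := by
    rw [tonelli]
    have hnull : (volume : Measure ℝ) ({-1, 0, 1} : Set ℝ) = 0 :=
      Set.Finite.measure_zero (by simp) volume
    have hcongr : ∫⁻ a : ℝ, ∫⁻ y : ℝ × ℝ,
        (W1 a (Real.sqrt (a^2 + y.1^2 + y.2^2))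
          + W1 (-a) (Real.sqrt (a^2 + y.1^2 + y.2^2)))
        = ∫⁻ a : ℝ, (Ioo (-1:ℝ) 1).indicator
            (fun a => ENNReal.ofReal (2*π*KK a)) a := by
      refine lintegral_congr_ae ?_
      filter_upwards [compl_mem_ae_iff.2 hnull] with a ha
      exact hpointwise a ha
    rw [hcongr, lintegral_indicator measurableSet_Ioo]
    rw [← ofReal_integral_eq_lintegral_ofReal]
    · congr 1
      rw [MeasureTheory.integral_const_mul, ← integral_Ioc_eq_integral_Ioo,
        ← intervalIntegral.integral_of_le (by norm_num : (-1:ℝ) ≤ 1), outer_integral]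
    · exact ((continuous_const.mul KK_cont).integrableOn_Icc).mono_set Ioo_subset_Icc_self
    · refine (ae_restrict_iff' measurableSet_Ioo).2
        (Filter.Eventually.of_forall fun a ha => ?_)
      have : a^2 ≤ 1 := by nlinarith [ha.1, ha.2]
      have := KK_nonneg this
      positivity
  have hI3val : I3 = ENNReal.ofReal (2*π/3) := by
    have h2 : (2:ℝ≥0∞) * I3 = (2:ℝ≥0∞) * ENNReal.ofReal (2*π/3) := by
      rw [houter]
      rw [show (2:ℝ≥0∞) = ENNReal.ofReal 2 by simp,
        ← ENNReal.ofReal_mul (by norm_num)]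
      congr 1
      ring
    have := congrArg (fun x => 2⁻¹ * x) h2
    simpa [← mul_assoc, ENNReal.inv_mul_cancel (two_ne_zero) (ENNReal.ofNat_ne_top)]
      using this
  rw [step1, step2, step3, hI3val]
  rw [show (3:ℝ≥0∞) = ENNReal.ofReal 3 by simp, ← ENNReal.ofReal_mul (by norm_num)]
  congr 1
  ring

theorem stmt_8 (p : S2) :
    1 / (4 * π) * ∫ q : S2, Real.log ‖(p : E3) - (q : E3)‖ ∂σ2 = Real.log 2 - 1 / 2 := by
  have hp : ‖(p : E3)‖ = 1 := by
    have := p.2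
    rwa [mem_sphere_zero_iff_norm] at this
  set φr : S2 → ℝ := fun q => Real.log 2 - Real.log ‖(p : E3) - (q : E3)‖ with hφrdef
  have hφmeas : Measurable φr :=
    measurable_const.sub (Real.measurable_log.comp
      ((continuous_const.sub continuous_subtype_val).norm.measurable))
  have hφnn : ∀ q, 0 ≤ φr q := by
    intro q
    have hle : ‖(p : E3) - (q : E3)‖ ≤ 2 := by
      have := norm_sub_le (p : E3) (q : E3)
      have hq : ‖(q : E3)‖ = 1 := by
        have := q.2; rwa [mem_sphere_zero_iff_norm] at this
      rw [hp, hq] at this; linarith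
    rcases le_or_gt ‖(p : E3) - (q : E3)‖ 1 with h | h
    · have h1 : Real.log ‖(p : E3) - (q : E3)‖ ≤ 0 := Real.log_nonpos (norm_nonneg _) h
      have h2 : (0:ℝ) ≤ Real.log 2 := Real.log_nonneg (by norm_num)
      simp only [hφrdef]; linarith
    · have := Real.log_le_log (by linarith) hle
      simp only [hφrdef]; linarith
  have hkey : ∫⁻ q : S2, ENNReal.ofReal (φr q) ∂σ2 = ENNReal.ofReal (2*π) :=
    key (p : E3) hp
  have hInt : Integrable φr σ2 := by
    refine ⟨hφmeas.aestronglyMeasurable, ?_⟩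
    rw [hasFiniteIntegral_iff_norm]
    have : ∀ q, ENNReal.ofReal ‖φr q‖ = ENNReal.ofReal (φr q) := fun q => by
      rw [Real.norm_eq_abs, abs_of_nonneg (hφnn q)]
    simp_rw [this]
    rw [hkey]
    exact ENNReal.ofReal_lt_top
  have hIntval : ∫ q, φr q ∂σ2 = 2*π := by
    rw [integral_eq_lintegral_of_nonneg_ae (Filter.Eventually.of_forall hφnn)
      hφmeas.aestronglyMeasurable, hkey, ENNReal.toReal_ofReal (by positivity)]
  have huniv : (σ2 univ).toReal = 4*π := by
    show ((volume : Measure E3).toSphere univ).toReal = 4*π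
    rw [sphere3_univ, ENNReal.toReal_ofReal (by positivity)]
  have hlogint : ∫ q : S2, Real.log ‖(p : E3) - (q : E3)‖ ∂σ2
      = 4*π*Real.log 2 - 2*π := by
    have hsplit : ∀ q : S2, Real.log ‖(p : E3) - (q : E3)‖ = Real.log 2 - φr q := by
      intro q; simp [hφrdef]
    simp_rw [hsplit]
    have : IsFiniteMeasure σ2 := by unfold σ2; infer_instance
    rw [integral_sub (integrable_const _) hInt, hIntval, MeasureTheory.integral_const, measureReal_def, huniv,
      smul_eq_mul]
  rw [hlogint]
  have hπ : π ≠ 0 := Real.pi_ne_zero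
  field_simp
  ring
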